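/- Let n ≥ 1 and v ≥ 2, let the secret space be the set X of databases x : Fin n → Fin v, and let O be a nonempty finite set. Let K be a channel from X to O that is ε-DP: for all databases x, x' differing in the value of exactly one coordinate and all o ∈ O, K x o ≤ exp(ε) · K x' o. Then for every prior π on X with G(π) > 0, β(π, K) ≥ (1 − (max_x π x) · (v · exp(ε) / (v − 1 + exp(ε)))^n) / (1 − max_x π x). -/

import Mathlib

/-- A channel from secrets `S` to outputs `O`: nonnegative entries, rows sum to 1. -/
def IsChannel {S O : Type*} [Fintype O] (C : S → O → ℝ) : Prop :=
  (∀ s o, 0 ≤ C s o) ∧ ∀ s, ∑ o, C s o = 1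

/-- A prior on `S`: nonnegative, sums to 1. -/
def IsPrior {S : Type*} [Fintype S] (π : S → ℝ) : Prop :=
  (∀ s, 0 ≤ π s) ∧ ∑ s, π s = 1

/-- Bayes risk `R*(π, C) = 1 − ∑_o max_s (π s · C s o)`. -/
noncomputable def bayesRisk {S O : Type*} [Fintype S] [Nonempty S] [Fintype O]
    (π : S → ℝ) (C : S → O → ℝ) : ℝ :=
  1 - ∑ o, Finset.univ.sup' Finset.univ_nonempty (fun s => π s * C s o)

/-- Guessing error `G(π) = 1 − max_s π s`. -/
noncomputable def guessErr {S : Type*} [Fintype S] [Nonempty S] (π : S → ℝ) : ℝ :=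
  1 - Finset.univ.sup' Finset.univ_nonempty π

/-- Multiplicative Bayes risk leakage `β(π, C) = R*(π, C) / G(π)`. -/
noncomputable def betaL {S O : Type*} [Fintype S] [Nonempty S] [Fintype O]
    (π : S → ℝ) (C : S → O → ℝ) : ℝ :=
  bayesRisk π C / guessErr π

/-- The prior `π_{ab}` assigning 1/2 to each of `a` and `b` and 0 elsewhere. -/
noncomputable def pairPrior {S : Type*} [DecidableEq S] (a b : S) : S → ℝ :=
  fun s => if s = a ∨ s = b then 1 / 2 else 0

/-- Bayes security `β*(C)`: the minimum of `β(π_{ab}, C)` over distinct pairs `a ≠ b`. -/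
noncomputable def betaStar {S O : Type*} [Fintype S] [Nonempty S] [DecidableEq S] [Fintype O]
    (C : S → O → ℝ) (h : 1 < Fintype.card S) : ℝ :=
  (Finset.univ.filter (fun p : S × S => p.1 ≠ p.2)).inf'
    (by
      obtain ⟨a, b, hab⟩ := Fintype.exists_pair_of_one_lt_card h
      exact ⟨(a, b), by simp [hab]⟩)
    (fun p => betaL (pairPrior p.1 p.2) C)

/-- Two databases are adjacent if they differ in the value of exactly one record. -/
def Adjacent {n v : ℕ} (x x' : Fin n → Fin v) : Prop :=
  ∃ i, x i ≠ x' i ∧ ∀ j, j ≠ i → x j = x' j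

lemma adj_cons_ne {m v : ℕ} (a b : Fin (v + 2)) (hab : a ≠ b) (y : Fin m → Fin (v + 2)) :
    Adjacent (Fin.cons a y) (Fin.cons b y) := by
  refine ⟨0, by simpa using hab, ?_⟩
  intro j hj
  obtain ⟨k, rfl⟩ := Fin.exists_succ_eq.mpr hj
  simp

lemma adj_cons_lift {m v : ℕ} (a : Fin (v + 2)) {y y' : Fin m → Fin (v + 2)}
    (h : Adjacent y y') : Adjacent (Fin.cons a y) (Fin.cons a y') := by
  obtain ⟨i, hi, hall⟩ := h
  refine ⟨i.succ, by simpa using hi, ?_⟩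
  intro j
  refine Fin.cases ?_ ?_ j
  · intro _; simp
  · intro k hk
    simp only [Fin.cons_succ]
    exact hall k (by simpa using hk)

lemma sum_ge_pow {v : ℕ} (ε : ℝ) : ∀ (m : ℕ) (f : (Fin m → Fin (v + 2)) → ℝ),
    (∀ x, 0 ≤ f x) →
    (∀ x x', Adjacent x x' → f x ≤ Real.exp ε * f x') →
    ∀ x₀, f x₀ * (1 + ((v : ℝ) + 1) * (Real.exp ε)⁻¹) ^ m ≤ ∑ x, f x := by
  intro m
  induction m with
  | zero =>
    intro f hf hDP x₀
    simp only [pow_zero, mul_one]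
    rw [Fintype.sum_subsingleton _ x₀]
  | succ m ih =>
    intro f hf hDP x₀
    have he : (0:ℝ) < Real.exp ε := Real.exp_pos ε
    set e := Real.exp ε with hee
    set t : ℝ := 1 + ((v : ℝ) + 1) * e⁻¹ with ht
    have ht0 : 0 < t := by positivity
    set a := x₀ 0 with ha
    set y₀ := Fin.tail x₀ with hy₀
    have hx₀ : x₀ = Fin.cons a y₀ := (Fin.cons_self_tail x₀).symm
    set g : (Fin m → Fin (v + 2)) → ℝ := fun y => f (Fin.cons a y) with hg
    have hg0 : ∀ y, 0 ≤ g y := fun y => hf _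
    have hgDP : ∀ y y', Adjacent y y' → g y ≤ e * g y' :=
      fun y y' h => hDP _ _ (adj_cons_lift a h)
    have hIH := ih g hg0 hgDP y₀
    have hper : ∀ y, t * g y ≤ ∑ b : Fin (v + 2), f (Fin.cons b y) := by
      intro y
      have hsplit : ∑ b : Fin (v + 2), f (Fin.cons b y)
          = f (Fin.cons a y) + ∑ b ∈ Finset.univ.erase a, f (Fin.cons b y) :=
        (Finset.add_sum_erase _ _ (Finset.mem_univ a)).symm
      have hbound : ∀ b ∈ Finset.univ.erase a, e⁻¹ * g y ≤ f (Fin.cons b y) := by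
        intro b hb
        have hba : b ≠ a := (Finset.mem_erase.mp hb).1
        have h2 := hDP (Fin.cons a y) (Fin.cons b y) (adj_cons_ne a b hba.symm y)
        rw [inv_mul_le_iff₀ he]
        exact h2
      have hcard : (Finset.univ.erase a).card = v + 1 := by
        rw [Finset.card_erase_of_mem (Finset.mem_univ a), Finset.card_univ, Fintype.card_fin]; omega
      have hsum2 : ((v : ℝ) + 1) * (e⁻¹ * g y) ≤ ∑ b ∈ Finset.univ.erase a, f (Fin.cons b y) := by
        have := Finset.card_nsmul_le_sum _ _ _ hbound
        rw [hcard, nsmul_eq_mul] at this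
        push_cast at this
        convert this using 2
      have : t * g y = g y + ((v : ℝ) + 1) * (e⁻¹ * g y) := by rw [ht]; ring
      rw [this, hsplit]
      exact add_le_add le_rfl hsum2
    have hsum : ∑ x : Fin (m + 1) → Fin (v + 2), f x
        = ∑ y : Fin m → Fin (v + 2), ∑ b : Fin (v + 2), f (Fin.cons b y) := by
      rw [← (Fin.consEquiv (fun _ : Fin (m + 1) => Fin (v + 2))).sum_comp f]
      rw [Fintype.sum_prod_type]
      rw [Finset.sum_comm]
      rfl
    calc f x₀ * t ^ (m + 1) = (g y₀ * t ^ m) * t := by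
          rw [hx₀]; ring
      _ ≤ (∑ y, g y) * t := mul_le_mul_of_nonneg_right hIH ht0.le
      _ = ∑ y, t * g y := by rw [Finset.sum_mul]; exact Finset.sum_congr rfl fun _ _ => mul_comm _ _
      _ ≤ ∑ y : Fin m → Fin (v + 2), ∑ b : Fin (v + 2), f (Fin.cons b y) :=
          Finset.sum_le_sum fun y _ => hper y
      _ = ∑ x, f x := hsum.symm

/-- if a mechanism `K` on databases with `n + 1 ≥ 1` records over `v + 2 ≥ 2`
values is `ε`-DP, then for every prior `π` with `G(π) > 0`,
`β(π, K) ≥ (1 − (max_x π x)·(v·exp ε/(v − 1 + exp ε))^n) / (1 − max_x π x)`. -/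
theorem dp_lower_bound_beta (n v : ℕ) (ε : ℝ) (hε : 0 ≤ ε) {O : Type*}
    [Fintype O] [Nonempty O]
    (K : (Fin (n + 1) → Fin (v + 2)) → O → ℝ) (hK : IsChannel K)
    (hDP : ∀ x x', Adjacent x x' → ∀ o, K x o ≤ Real.exp ε * K x' o)
    (π : (Fin (n + 1) → Fin (v + 2)) → ℝ) (hπ : IsPrior π) (hG : 0 < guessErr π) :
    (1 - (Finset.univ.sup' Finset.univ_nonempty π) *
          (((v : ℝ) + 2) * Real.exp ε / (((v : ℝ) + 2) - 1 + Real.exp ε)) ^ (n + 1)) /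
        (1 - Finset.univ.sup' Finset.univ_nonempty π)
      ≤ betaL π K := by
  obtain ⟨hKnn, hKsum⟩ := hK
  have he : (0:ℝ) < Real.exp ε := Real.exp_pos ε
  set e := Real.exp ε with hee
  set t : ℝ := 1 + ((v : ℝ) + 1) * e⁻¹ with ht
  have ht0 : 0 < t := by positivity
  set M := Finset.univ.sup' Finset.univ_nonempty π with hM
  have hM0 : 0 ≤ M :=
    le_trans (hπ.1 (Classical.arbitrary _)) (Finset.le_sup' π (Finset.mem_univ _))
  set c : ℝ := ((v : ℝ) + 2) * e / (((v : ℝ) + 2) - 1 + e) with hc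
  have hv : (0:ℝ) ≤ (v : ℝ) := Nat.cast_nonneg v
  have hd : (((v : ℝ) + 2) - 1 + e) ≠ 0 := by nlinarith
  have hct : c * t = (v : ℝ) + 2 := by
    rw [hc, ht]
    field_simp
    ring
  have key : ∀ o, Finset.univ.sup' Finset.univ_nonempty (fun s => π s * K s o)
      ≤ M / t ^ (n + 1) * ∑ x, K x o := by
    intro o
    obtain ⟨s, _, hs⟩ := Finset.exists_mem_eq_sup' Finset.univ_nonempty (fun s => π s * K s o)
    rw [hs]
    have h1 : K s o * t ^ (n + 1) ≤ ∑ x, K x o :=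
      sum_ge_pow ε (n + 1) (fun x => K x o) (fun x => hKnn x o)
        (fun x x' h => hDP x x' h o) s
    have h2 : K s o ≤ (∑ x, K x o) / t ^ (n + 1) := by
      rw [le_div_iff₀ (by positivity)]
      exact h1
    calc π s * K s o ≤ M * K s o :=
          mul_le_mul_of_nonneg_right (Finset.le_sup' π (Finset.mem_univ s)) (hKnn s o)
      _ ≤ M * ((∑ x, K x o) / t ^ (n + 1)) := mul_le_mul_of_nonneg_left h2 hM0
      _ = M / t ^ (n + 1) * ∑ x, K x o := by ring
  have hcard : ∑ x : Fin (n + 1) → Fin (v + 2), (1 : ℝ) = ((v : ℝ) + 2) ^ (n + 1) := by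
    rw [Finset.sum_const, Finset.card_univ, nsmul_eq_mul, mul_one]
    rw [show Fintype.card (Fin (n + 1) → Fin (v + 2)) = (v + 2) ^ (n + 1) by
      simp [Fintype.card_fun]]
    push_cast
    ring
  have hS : ∑ o, Finset.univ.sup' Finset.univ_nonempty (fun s => π s * K s o)
      ≤ M * c ^ (n + 1) := by
    calc ∑ o, Finset.univ.sup' Finset.univ_nonempty (fun s => π s * K s o)
        ≤ ∑ o, M / t ^ (n + 1) * ∑ x, K x o := Finset.sum_le_sum fun o _ => key o
      _ = M / t ^ (n + 1) * ∑ x, ∑ o, K x o := by rw [← Finset.mul_sum, Finset.sum_comm]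
      _ = M / t ^ (n + 1) * ((v : ℝ) + 2) ^ (n + 1) := by
          rw [show (∑ x : Fin (n + 1) → Fin (v + 2), ∑ o, K x o)
              = ∑ x : Fin (n + 1) → Fin (v + 2), (1 : ℝ) from
            Finset.sum_congr rfl fun x _ => hKsum x, hcard]
      _ = M * c ^ (n + 1) := by
          rw [show ((v : ℝ) + 2) ^ (n + 1) = c ^ (n + 1) * t ^ (n + 1) by
            rw [← mul_pow, hct]]
          field_simp
  have hG' : 0 < 1 - M := hG
  rw [betaL, bayesRisk, guessErr]
  rw [div_le_div_iff_of_pos_right hG']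
  linarith
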